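/- (Evidence consistency for exponential scale testing.) Let π be a probability density on (0,∞) and for data with sample mean ȳ and sample size n define B₁₂(ȳ) = μ₀^{-n} e^{-nȳ/μ₀} / ∫₀^∞ μ^{-n} e^{-nȳ/μ} π(μ) dμ. Then for all n ≥ k > 0, B₁₂(ȳ) → 0 as ȳ → 0⁺ if and only if ∫₀^1 μ^{-k} π(μ) dμ = ∞. -/

import Mathlib

open Real MeasureTheory Set Filter

/-- Evidence consistency for exponential scale testing: with prior density `pr` on
`(0,∞)`, the Bayes factor
`B₁₂(ybar) = μ₀^{-n} e^{-nybar/μ₀} / ∫₀^∞ μ^{-n} e^{-nybar/μ} pr(μ) dμ`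
tends to `0` as `ybar → 0⁺` for all `n ≥ k > 0` if and only if
`∫₀^1 μ^{-k} pr(μ) dμ = ∞`. -/
theorem evidence_consistency_expScale (μ₀ : ℝ) (hμ₀ : 0 < μ₀) (pr : ℝ → ℝ)
    (hpr0 : ∀ μ, 0 ≤ pr μ) (hprm : Measurable pr)
    (hpr1 : (∫ μ in Set.Ioi (0:ℝ), pr μ) = 1) (k : ℕ) (hk : 0 < k) :
    (∀ n : ℕ, k ≤ n →
      Tendsto (fun ybar : ℝ =>
          (μ₀ ^ (-(n:ℝ)) * Real.exp (-((n:ℝ) * ybar) / μ₀)) /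
            ∫ μ in Set.Ioi (0:ℝ), μ ^ (-(n:ℝ)) * Real.exp (-((n:ℝ) * ybar) / μ) * pr μ)
        (nhdsWithin 0 (Set.Ioi 0)) (nhds 0)) ↔
    ¬ IntegrableOn (fun μ : ℝ => pr μ / μ ^ k) (Set.Ioc 0 1) := by
  -- notation
  set F : ℕ → ℝ → ℝ → ℝ :=
    fun n ybar μ => μ ^ (-(n:ℝ)) * Real.exp (-((n:ℝ) * ybar) / μ) * pr μ with hF
  -- basic facts
  have hprInt : IntegrableOn pr (Set.Ioi (0:ℝ)) := by
    by_contra h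
    rw [MeasureTheory.integral_undef h] at hpr1
    exact one_ne_zero hpr1.symm
  have hFmeas : ∀ (n : ℕ) (ybar : ℝ), Measurable (F n ybar) := by
    intro n ybar; fun_prop
  have hFnonneg : ∀ (n : ℕ) (ybar : ℝ) (μ : ℝ), 0 < μ → 0 ≤ F n ybar μ := by
    intro n ybar μ hμ
    exact mul_nonneg (mul_nonneg (Real.rpow_nonneg hμ.le _) (Real.exp_nonneg _)) (hpr0 μ)
  -- the key exponential bound
  have hkey : ∀ (c : ℝ), 0 < c → ∀ (μ : ℝ), 0 < μ → ∀ (n : ℕ),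
      μ ^ (-(n:ℝ)) * Real.exp (-c / μ) ≤ (Nat.factorial n : ℝ) / c ^ n := by
    intro c hc μ hμ n
    have h1 : (c/μ)^n / (Nat.factorial n : ℝ) ≤ Real.exp (c/μ) :=
      Real.pow_div_factorial_le_exp (x := c/μ) (by positivity) n
    rw [Real.rpow_neg hμ.le, Real.rpow_natCast, neg_div, Real.exp_neg]
    rw [div_pow] at h1
    have hexp : (0:ℝ) < Real.exp (c/μ) := Real.exp_pos _
    rw [div_div, div_le_iff₀ (by positivity)] at h1
    rw [le_div_iff₀ (by positivity)]
    have hμn : (0:ℝ) < μ ^ n := pow_pos hμ n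
    have h2 := mul_le_mul_of_nonneg_left h1
      (le_of_lt (mul_pos (inv_pos.mpr hμn) (inv_pos.mpr hexp)))
    have h3 : (μ^n)⁻¹ * (Real.exp (c/μ))⁻¹ * (Real.exp (c/μ) * (μ^n * (Nat.factorial n : ℝ)))
        = (Nat.factorial n : ℝ) := by field_simp
    calc (μ ^ n)⁻¹ * (Real.exp (c/μ))⁻¹ * c ^ n
        ≤ (μ^n)⁻¹ * (Real.exp (c/μ))⁻¹ * (Real.exp (c/μ) * (μ^n * (Nat.factorial n : ℝ))) := h2
      _ = _ := h3
  -- integrability for ybar > 0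
  have hFint : ∀ (n : ℕ), 0 < n → ∀ (ybar : ℝ), 0 < ybar →
      IntegrableOn (F n ybar) (Set.Ioi (0:ℝ)) := by
    intro n hn ybar hy
    have hc : (0:ℝ) < (n:ℝ) * ybar := by positivity
    refine Integrable.mono' (hprInt.const_mul ((Nat.factorial n : ℝ) / ((n:ℝ)*ybar) ^ n))
      ((hFmeas n ybar).aestronglyMeasurable) ?_
    filter_upwards [ae_restrict_mem measurableSet_Ioi] with μ hμ
    rw [Real.norm_of_nonneg (hFnonneg n ybar μ hμ)]
    calc F n ybar μ ≤ ((Nat.factorial n : ℝ) / ((n:ℝ)*ybar) ^ n) * pr μ := by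
          exact mul_le_mul_of_nonneg_right (hkey _ hc μ hμ n) (hpr0 μ)
      _ = _ := rfl
  -- antitonicity of the denominator integrand in ybar
  have hFanti : ∀ (n : ℕ) (a b : ℝ), a ≤ b → ∀ (μ : ℝ), 0 < μ → F n b μ ≤ F n a μ := by
    intro n a b hab μ hμ
    refine mul_le_mul_of_nonneg_right (mul_le_mul_of_nonneg_left ?_
      (Real.rpow_nonneg hμ.le _)) (hpr0 μ)
    gcongr
  -- monotonicity of the denominator integral in ybar
  have hDmono : ∀ (n : ℕ), 0 < n → ∀ (a b : ℝ), 0 < a → a ≤ b →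
      (∫ μ in Set.Ioi (0:ℝ), F n b μ) ≤ ∫ μ in Set.Ioi (0:ℝ), F n a μ := by
    intro n hn a b ha hab
    exact setIntegral_mono_on (hFint n hn b (ha.trans_le hab)) (hFint n hn a ha)
      measurableSet_Ioi (fun μ hμ => hFanti n a b hab μ hμ)
  -- numerator limit
  have hNum : ∀ n : ℕ, Tendsto (fun ybar : ℝ => μ₀ ^ (-(n:ℝ)) * Real.exp (-((n:ℝ) * ybar) / μ₀))
      (nhdsWithin 0 (Set.Ioi 0)) (nhds (μ₀ ^ (-(n:ℝ)))) := by
    intro n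
    have hc : Continuous fun y : ℝ => μ₀ ^ (-(n:ℝ)) * Real.exp (-((n:ℝ) * y) / μ₀) := by
      fun_prop
    have := (hc.tendsto 0).mono_left (nhdsWithin_le_nhds (s := Set.Ioi 0))
    simpa using this
  constructor
  · -- evidence consistency implies divergence of the prior integral
    intro H hint
    have Hk := H k le_rfl
    -- the dominating function
    set b : ℝ → ℝ := fun μ => μ ^ (-(k:ℝ)) * pr μ with hb
    have hbmeas : Measurable b := by fun_prop
    have hbInt : IntegrableOn b (Set.Ioi (0:ℝ)) := by
      rw [← Set.Ioc_union_Ioi_eq_Ioi (by norm_num : (0:ℝ) ≤ 1)]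
      apply IntegrableOn.union
      · refine hint.congr_fun (fun μ hμ => ?_) measurableSet_Ioc
        show pr μ / μ ^ k = μ ^ (-(k:ℝ)) * pr μ
        rw [Real.rpow_neg hμ.1.le, Real.rpow_natCast, div_eq_mul_inv, mul_comm]
      · refine Integrable.mono' (hprInt.mono_set (Set.Ioi_subset_Ioi (by norm_num)))
          (hbmeas.aestronglyMeasurable) ?_
        filter_upwards [ae_restrict_mem measurableSet_Ioi] with μ hμ
        have hμ1 : (1:ℝ) < μ := hμ
        have h0 : (0:ℝ) < μ := lt_trans one_pos hμ1
        rw [Real.norm_of_nonneg (mul_nonneg (Real.rpow_nonneg h0.le _) (hpr0 μ))]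
        calc μ ^ (-(k:ℝ)) * pr μ ≤ 1 * pr μ := by
              exact mul_le_mul_of_nonneg_right
                (Real.rpow_le_one_of_one_le_of_nonpos hμ1.le
                  (neg_nonpos.mpr (Nat.cast_nonneg k))) (hpr0 μ)
          _ = pr μ := one_mul _
    -- the limiting integral is positive
    set L : ℝ := ∫ μ in Set.Ioi (0:ℝ), b μ with hL
    have hbnn : 0 ≤ᵐ[volume.restrict (Set.Ioi (0:ℝ))] b := by
      filter_upwards [ae_restrict_mem measurableSet_Ioi] with μ hμ
      exact mul_nonneg (Real.rpow_nonneg (le_of_lt hμ) _) (hpr0 μ)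
    have hLnn : 0 ≤ L := integral_nonneg_of_ae hbnn
    have hLpos : 0 < L := by
      rcases hLnn.lt_or_eq with h | h
      · exact h
      · exfalso
        have h0 : b =ᵐ[volume.restrict (Set.Ioi (0:ℝ))] 0 :=
          (integral_eq_zero_iff_of_nonneg_ae hbnn hbInt).mp h.symm
        have hpr0' : pr =ᵐ[volume.restrict (Set.Ioi (0:ℝ))] 0 := by
          filter_upwards [h0, ae_restrict_mem measurableSet_Ioi] with μ hbμ hμ
          have hpow : (0:ℝ) < μ ^ (-(k:ℝ)) := Real.rpow_pos_of_pos hμ _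
          have : μ ^ (-(k:ℝ)) * pr μ = 0 := hbμ
          exact (mul_eq_zero.mp this).resolve_left hpow.ne'
        rw [integral_congr_ae hpr0'] at hpr1
        simp at hpr1
    -- denominator converges to L by dominated convergence
    have hDtend : Tendsto (fun ybar : ℝ => ∫ μ in Set.Ioi (0:ℝ), F k ybar μ)
        (nhdsWithin 0 (Set.Ioi 0)) (nhds L) := by
      refine tendsto_integral_filter_of_dominated_convergence b
        (Filter.Eventually.of_forall fun ybar => (hFmeas k ybar).aestronglyMeasurable) ?_ hbInt ?_
      · filter_upwards [self_mem_nhdsWithin] with ybar (hy : (0:ℝ) < ybar)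
        filter_upwards [ae_restrict_mem measurableSet_Ioi] with μ hμ
        rw [Real.norm_of_nonneg (hFnonneg k ybar μ hμ)]
        calc F k ybar μ ≤ μ ^ (-(k:ℝ)) * 1 * pr μ := by
              refine mul_le_mul_of_nonneg_right (mul_le_mul_of_nonneg_left
                (Real.exp_le_one_iff.mpr ?_) (Real.rpow_nonneg hμ.le _)) (hpr0 μ)
              apply div_nonpos_of_nonpos_of_nonneg _ hμ.le
              simp [mul_nonneg (Nat.cast_nonneg k) hy.le]
          _ = b μ := by rw [mul_one]
      · filter_upwards [ae_restrict_mem measurableSet_Ioi] with μ hμ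
        have hc : Continuous fun y : ℝ => μ ^ (-(k:ℝ)) * Real.exp (-((k:ℝ) * y) / μ) * pr μ := by
          fun_prop
        have := (hc.tendsto 0).mono_left (nhdsWithin_le_nhds (s := Set.Ioi 0))
        simpa [hF, hb] using this
    -- the ratio converges to a positive limit, contradiction
    have hRatio : Tendsto (fun ybar : ℝ =>
        (μ₀ ^ (-(k:ℝ)) * Real.exp (-((k:ℝ) * ybar) / μ₀)) /
          ∫ μ in Set.Ioi (0:ℝ), F k ybar μ)
        (nhdsWithin 0 (Set.Ioi 0)) (nhds (μ₀ ^ (-(k:ℝ)) / L)) :=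
      (hNum k).div hDtend hLpos.ne'
    have huniq : (0:ℝ) = μ₀ ^ (-(k:ℝ)) / L := tendsto_nhds_unique Hk hRatio
    have : (0:ℝ) < μ₀ ^ (-(k:ℝ)) / L := div_pos (Real.rpow_pos_of_pos hμ₀ _) hLpos
    exact absurd huniq.symm this.ne'
  · -- divergence implies evidence consistency
    intro hdiv n hn
    have hn1 : 0 < n := hk.trans_le hn
    set cseq : ℕ → ℝ := fun m => 1 / ((m:ℝ) + 1) with hcseq
    have hcpos : ∀ m : ℕ, 0 < cseq m := fun m => by positivity
    -- the lintegral of the limit function diverges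
    have hGtop : ∫⁻ μ in Set.Ioi (0:ℝ), ENNReal.ofReal (μ ^ (-(n:ℝ)) * pr μ) = ⊤ := by
      have hgm : Measurable fun μ : ℝ => pr μ / μ ^ k := by fun_prop
      have h1 : ∫⁻ μ in Set.Ioc (0:ℝ) 1, ENNReal.ofReal (pr μ / μ ^ k) = ⊤ := by
        by_contra h
        refine hdiv ((lintegral_ofReal_ne_top_iff_integrable hgm.aestronglyMeasurable ?_).mp h)
        filter_upwards [ae_restrict_mem measurableSet_Ioc] with μ hμ
        exact div_nonneg (hpr0 μ) (pow_nonneg hμ.1.le k)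
      have h2 : ∫⁻ μ in Set.Ioc (0:ℝ) 1, ENNReal.ofReal (pr μ / μ ^ k)
          ≤ ∫⁻ μ in Set.Ioc (0:ℝ) 1, ENNReal.ofReal (μ ^ (-(n:ℝ)) * pr μ) := by
        refine setLIntegral_mono_ae' measurableSet_Ioc
          (Filter.Eventually.of_forall fun μ hμ => ?_)
        apply ENNReal.ofReal_le_ofReal
        rw [Real.rpow_neg hμ.1.le, Real.rpow_natCast, div_eq_mul_inv, mul_comm]
        refine mul_le_mul_of_nonneg_right ?_ (hpr0 μ)
        exact inv_anti₀ (pow_pos hμ.1 n) (pow_le_pow_of_le_one hμ.1.le hμ.2 hn)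
      have h3 : ∫⁻ μ in Set.Ioc (0:ℝ) 1, ENNReal.ofReal (μ ^ (-(n:ℝ)) * pr μ)
          ≤ ∫⁻ μ in Set.Ioi (0:ℝ), ENNReal.ofReal (μ ^ (-(n:ℝ)) * pr μ) :=
        lintegral_mono_set Set.Ioc_subset_Ioi_self
      rw [h1] at h2
      exact top_le_iff.mp (le_trans h2 h3)
    -- monotone convergence along the sequence cseq
    have hseq : Tendsto (fun m : ℕ => ∫⁻ μ in Set.Ioi (0:ℝ), ENNReal.ofReal (F n (cseq m) μ))
        atTop (nhds (∫⁻ μ in Set.Ioi (0:ℝ), ENNReal.ofReal (μ ^ (-(n:ℝ)) * pr μ))) := by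
      refine lintegral_tendsto_of_tendsto_of_monotone
        (fun m => ((hFmeas n (cseq m)).ennreal_ofReal).aemeasurable) ?_ ?_
      · filter_upwards [ae_restrict_mem measurableSet_Ioi] with μ hμ
        intro i j hij
        refine ENNReal.ofReal_le_ofReal (hFanti n (cseq j) (cseq i) ?_ μ hμ)
        apply one_div_le_one_div_of_le (by positivity)
        have : (i:ℝ) ≤ (j:ℝ) := Nat.cast_le.mpr hij
        linarith
      · filter_upwards [ae_restrict_mem measurableSet_Ioi] with μ hμ
        have h1 : Tendsto cseq atTop (nhds 0) := tendsto_one_div_add_atTop_nhds_zero_nat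
        have h2 : Continuous fun y : ℝ => F n y μ := by fun_prop
        have h3 := (h2.tendsto 0).comp h1
        have h4 : F n 0 μ = μ ^ (-(n:ℝ)) * pr μ := by simp [hF]
        rw [h4] at h3
        exact (ENNReal.continuous_ofReal.tendsto _).comp h3
    rw [hGtop] at hseq
    -- finiteness and representation of the denominator
    have hFnonneg' : ∀ y : ℝ, 0 ≤ᵐ[volume.restrict (Set.Ioi (0:ℝ))] F n y := by
      intro y
      filter_upwards [ae_restrict_mem measurableSet_Ioi] with μ hμ
      exact hFnonneg n y μ hμ
    have hfin : ∀ y : ℝ, 0 < y → ∫⁻ μ in Set.Ioi (0:ℝ), ENNReal.ofReal (F n y μ) ≠ ⊤ :=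
      fun y hy => (lintegral_ofReal_ne_top_iff_integrable
        (hFmeas n y).aestronglyMeasurable (hFnonneg' y)).mpr (hFint n hn1 y hy)
    have hDrepr : ∀ y : ℝ, (∫ μ in Set.Ioi (0:ℝ), F n y μ)
        = (∫⁻ μ in Set.Ioi (0:ℝ), ENNReal.ofReal (F n y μ)).toReal :=
      fun y => integral_eq_lintegral_of_nonneg_ae (hFnonneg' y) (hFmeas n y).aestronglyMeasurable
    -- the denominator tends to infinity
    have hDtop : Tendsto (fun ybar : ℝ => ∫ μ in Set.Ioi (0:ℝ), F n ybar μ)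
        (nhdsWithin 0 (Set.Ioi 0)) atTop := by
      rw [tendsto_atTop]
      intro M
      have hev : ∀ᶠ m : ℕ in atTop,
          ENNReal.ofReal M < ∫⁻ μ in Set.Ioi (0:ℝ), ENNReal.ofReal (F n (cseq m) μ) :=
        hseq.eventually (eventually_gt_nhds ENNReal.ofReal_lt_top)
      obtain ⟨m, hm⟩ := hev.exists
      have hMD : M ≤ ∫ μ in Set.Ioi (0:ℝ), F n (cseq m) μ := by
        rw [hDrepr (cseq m)]
        rcases le_or_gt M 0 with h | h
        · exact h.trans ENNReal.toReal_nonneg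
        · have h5 := (ENNReal.toReal_lt_toReal ENNReal.ofReal_ne_top
            (hfin (cseq m) (hcpos m))).mpr hm
          rw [ENNReal.toReal_ofReal h.le] at h5
          exact h5.le
      filter_upwards [Ioo_mem_nhdsGT_of_mem
        (show (0:ℝ) ∈ Set.Ico 0 (cseq m) from ⟨le_refl _, hcpos m⟩)] with y hy
      exact hMD.trans (hDmono n hn1 y (cseq m) hy.1 hy.2.le)
    exact (hNum n).div_atTop hDtop
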